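/- Let f : A(a, ∞) → ℝ be a Lipschitz function on the closed annulus {x ∈ ℝ² : |x| ≥ a} with Lipschitz constant L, and define its canonical extension f̃ : ℝ² → ℝ by: f̃ = f on the annulus, f̃(0) equals the mean value of f over the circle of radius a, and f̃ is affine (linear in r) along each radial segment from 0 to the circle of radius a. Then f̃ is Lipschitz with Lipschitz constant bounded by a universal constant times L. -/

import Mathlib

open MeasureTheory

variable {E : Type*} [NormedAddCommGroup E] [NormedSpace ℝ E]

lemma aux_norm_smul (a : ℝ) (ha : 0 ≤ a) (x : E) (hx : x ≠ 0) :
    ‖(a / ‖x‖) • x‖ = a := by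
  have h : ‖x‖ ≠ 0 := norm_ne_zero_iff.mpr hx
  rw [norm_smul, Real.norm_eq_abs, abs_div, abs_of_nonneg ha,
    abs_of_nonneg (norm_nonneg x), div_mul_cancel₀ _ h]

lemma aux_dist_smul (a : ℝ) (x : E) (hx : x ≠ 0) :
    ‖(a / ‖x‖) • x - x‖ = |a - ‖x‖| := by
  have h : ‖x‖ ≠ 0 := norm_ne_zero_iff.mpr hx
  have : (a / ‖x‖) • x - x = ((a - ‖x‖) / ‖x‖) • x := by
    rw [sub_div, div_self h, sub_smul, one_smul]
  rw [this, norm_smul, Real.norm_eq_abs, abs_div, abs_of_nonneg (norm_nonneg x),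
    div_mul_cancel₀ _ h]

lemma aux_proj_diff (a : ℝ) (ha : 0 ≤ a) (x y : E) (hx : x ≠ 0) (hy : y ≠ 0)
    (hxy : ‖x‖ ≤ ‖y‖) :
    ‖x‖ * ‖(a / ‖x‖) • x - (a / ‖y‖) • y‖ ≤ 2 * a * ‖x - y‖ := by
  have hr : (0:ℝ) < ‖x‖ := norm_pos_iff.mpr hx
  have hs : (0:ℝ) < ‖y‖ := norm_pos_iff.mpr hy
  have key : (a / ‖x‖) • x - (a / ‖y‖) • y
      = (a / ‖x‖) • (x - y) + ((a / ‖x‖) - (a / ‖y‖)) • y := by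
    rw [smul_sub, sub_smul]; abel
  have h1 : ‖(a / ‖x‖) • (x - y)‖ = (a / ‖x‖) * ‖x - y‖ := by
    rw [norm_smul, Real.norm_eq_abs, abs_of_nonneg (div_nonneg ha hr.le)]
  have h2 : ‖((a / ‖x‖) - (a / ‖y‖)) • y‖ = ((a / ‖x‖) - (a / ‖y‖)) * ‖y‖ := by
    rw [norm_smul, Real.norm_eq_abs, abs_of_nonneg]
    exact sub_nonneg.mpr (div_le_div_of_nonneg_left ha hr hxy)
  have hdiff : ‖y‖ - ‖x‖ ≤ ‖x - y‖ := by
    rw [norm_sub_rev]; exact (abs_le.mp (abs_norm_sub_norm_le y x)).2 |>.trans_eq rfl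
  calc ‖x‖ * ‖(a / ‖x‖) • x - (a / ‖y‖) • y‖
      ≤ ‖x‖ * (‖(a / ‖x‖) • (x - y)‖ + ‖((a / ‖x‖) - (a / ‖y‖)) • y‖) := by
        rw [key]; exact mul_le_mul_of_nonneg_left (norm_add_le _ _) hr.le
    _ = a * ‖x - y‖ + a * (‖y‖ - ‖x‖) := by
        rw [h1, h2]; field_simp
    _ ≤ a * ‖x - y‖ + a * ‖x - y‖ := by
        exact add_le_add (le_refl _) (mul_le_mul_of_nonneg_left hdiff ha)
    _ = 2 * a * ‖x - y‖ := by ring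

lemma circle_norm (a θ : ℝ) (ha : 0 ≤ a) :
    ‖(EuclideanSpace.equiv (Fin 2) ℝ).symm ![a * Real.cos θ, a * Real.sin θ]‖ = a := by
  rw [EuclideanSpace.norm_eq]
  simp [Fin.sum_univ_two, mul_pow]
  rw [show a^2 * Real.cos θ^2 + a^2 * Real.sin θ^2 = a^2 by
    have := Real.sin_sq_add_cos_sq θ; nlinarith]
  exact Real.sqrt_sq ha

lemma mean_bound (a : ℝ) (ha : 0 < a) (f : EuclideanSpace ℝ (Fin 2) → ℝ) (L : NNReal)
    (hf : LipschitzOnWith L f {x | a ≤ ‖x‖}) (p : EuclideanSpace ℝ (Fin 2)) (hp : a ≤ ‖p‖) (hp' : ‖p‖ ≤ a) :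
    |(2 * Real.pi)⁻¹ * (∫ θ in (0:ℝ)..(2 * Real.pi),
      f ((EuclideanSpace.equiv (Fin 2) ℝ).symm ![a * Real.cos θ, a * Real.sin θ])) - f p|
      ≤ 2 * a * L := by
  set c : ℝ → EuclideanSpace ℝ (Fin 2) :=
    fun θ => (EuclideanSpace.equiv (Fin 2) ℝ).symm ![a * Real.cos θ, a * Real.sin θ] with hc
  have hnc : ∀ θ, ‖c θ‖ = a := fun θ => circle_norm a θ ha.le
  have hvec : Continuous fun θ : ℝ => ![a * Real.cos θ, a * Real.sin θ] := by
    apply continuous_pi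
    intro i
    fin_cases i <;> simp <;> fun_prop
  have hccont : Continuous c := (EuclideanSpace.equiv (Fin 2) ℝ).symm.continuous.comp hvec
  have hcont : Continuous fun θ => f (c θ) :=
    hf.continuousOn.comp_continuous hccont (fun θ => by simp [hnc θ])
  have hint : IntervalIntegrable (fun θ => f (c θ)) MeasureTheory.volume 0 (2 * Real.pi) :=
    hcont.intervalIntegrable _ _
  have hfd := (lipschitzOnWith_iff_dist_le_mul.mp hf)
  have hpi : (0:ℝ) < 2 * Real.pi := by positivity
  have key : (∫ θ in (0:ℝ)..(2 * Real.pi), f (c θ)) - 2 * Real.pi * f p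
      = ∫ θ in (0:ℝ)..(2 * Real.pi), (f (c θ) - f p) := by
    rw [intervalIntegral.integral_sub hint (intervalIntegrable_const),
      intervalIntegral.integral_const]
    simp [smul_eq_mul]
  have hbd : ∀ θ ∈ Set.uIoc (0:ℝ) (2 * Real.pi), ‖f (c θ) - f p‖ ≤ 2 * a * L := by
    intro θ _
    have := hfd (c θ) (by simp [hnc θ]) p (by simpa using hp)
    rw [Real.norm_eq_abs, ← Real.dist_eq]
    calc dist (f (c θ)) (f p) ≤ L * dist (c θ) p := this
      _ ≤ L * (‖c θ‖ + ‖p‖) := by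
          apply mul_le_mul_of_nonneg_left _ L.coe_nonneg
          rw [dist_eq_norm]; exact (norm_sub_le _ _)
      _ ≤ 2 * a * L := by rw [hnc θ]; nlinarith [L.coe_nonneg]
  have hI : |(∫ θ in (0:ℝ)..(2 * Real.pi), (f (c θ) - f p))| ≤ 2 * a * L * |2 * Real.pi - 0| := by
    exact intervalIntegral.norm_integral_le_of_norm_le_const hbd
  calc |(2 * Real.pi)⁻¹ * (∫ θ in (0:ℝ)..(2 * Real.pi), f (c θ)) - f p|
      = (2 * Real.pi)⁻¹ * |(∫ θ in (0:ℝ)..(2 * Real.pi), f (c θ)) - 2 * Real.pi * f p| := by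
        have h2pi : (2*Real.pi) ≠ 0 := ne_of_gt hpi
        have heq : (2 * Real.pi)⁻¹ * (∫ θ in (0:ℝ)..(2 * Real.pi), f (c θ)) - f p
            = (2 * Real.pi)⁻¹ * ((∫ θ in (0:ℝ)..(2 * Real.pi), f (c θ)) - 2 * Real.pi * f p) := by
          field_simp
        rw [heq, abs_mul, abs_of_pos (show (0:ℝ) < (2*Real.pi)⁻¹ by positivity)]
    _ ≤ (2 * Real.pi)⁻¹ * (2 * a * L * (2 * Real.pi)) := by
        apply mul_le_mul_of_nonneg_left _ (by positivity)
        rw [key]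
        simpa [abs_of_pos hpi] using hI
    _ = 2 * a * L := by field_simp

/-- The canonical extension of a Lipschitz function on the annulus `{‖x‖ ≥ a}`
(extended radially-affinely inside, with value at the origin the mean value of
`f` over the circle of radius `a`) is Lipschitz, with constant bounded by a
universal constant times the Lipschitz constant of `f`. -/
theorem stmt_12 :
    ∃ C : NNReal, ∀ a : ℝ, 0 < a →
      ∀ (f : EuclideanSpace ℝ (Fin 2) → ℝ) (L : NNReal),
        LipschitzOnWith L f {x | a ≤ ‖x‖} →
        LipschitzWith (C * L) (fun x : EuclideanSpace ℝ (Fin 2) =>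
          if a ≤ ‖x‖ then f x
          else (‖x‖ / a) * f ((a / ‖x‖) • x) + (1 - ‖x‖ / a) *
            ((2 * Real.pi)⁻¹ * ∫ θ in (0:ℝ)..(2 * Real.pi),
              f ((EuclideanSpace.equiv (Fin 2) ℝ).symm
                ![a * Real.cos θ, a * Real.sin θ]))) := by

  refine ⟨6, ?_⟩
  intro a ha f L hf
  set M : ℝ := (2 * Real.pi)⁻¹ * ∫ θ in (0:ℝ)..(2 * Real.pi),
      f ((EuclideanSpace.equiv (Fin 2) ℝ).symm
        ![a * Real.cos θ, a * Real.sin θ]) with hMdef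
  have hL : (0:ℝ) ≤ L := L.coe_nonneg
  have ha' : a ≠ 0 := ne_of_gt ha
  have hfd := lipschitzOnWith_iff_dist_le_mul.mp hf
  have hfd' : ∀ p q : EuclideanSpace ℝ (Fin 2), a ≤ ‖p‖ → a ≤ ‖q‖ →
      |f p - f q| ≤ L * ‖p - q‖ := by
    intro p q hp hq
    have := hfd p (by simpa) q (by simpa)
    simpa [Real.dist_eq, dist_eq_norm] using this
  have hM : ∀ p : EuclideanSpace ℝ (Fin 2), ‖p‖ = a → |M - f p| ≤ 2 * a * L :=
    fun p hp => mean_bound a ha f L hf p hp.ge hp.le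
  -- interior-interior estimate (with ‖x‖ ≤ ‖y‖)
  have inner : ∀ x y : EuclideanSpace ℝ (Fin 2), ‖x‖ < a → ‖y‖ < a → ‖x‖ ≤ ‖y‖ →
      |((‖x‖/a) * f ((a/‖x‖) • x) + (1 - ‖x‖/a) * M)
        - ((‖y‖/a) * f ((a/‖y‖) • y) + (1 - ‖y‖/a) * M)| ≤ 6 * L * ‖x - y‖ := by
    intro x y hx hy hxy
    have hr : (0:ℝ) ≤ ‖x‖ := norm_nonneg x
    have hs : (0:ℝ) ≤ ‖y‖ := norm_nonneg y
    have hd : ‖y‖ - ‖x‖ ≤ ‖x - y‖ := by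
      rw [norm_sub_rev]; exact (norm_sub_norm_le y x)
    have hnn : (0:ℝ) ≤ ‖x - y‖ := norm_nonneg _
    have keyid : ((‖x‖/a) * f ((a/‖x‖) • x) + (1 - ‖x‖/a) * M)
        - ((‖y‖/a) * f ((a/‖y‖) • y) + (1 - ‖y‖/a) * M)
        = (‖x‖/a) * (f ((a/‖x‖) • x) - f ((a/‖y‖) • y))
          + ((‖x‖ - ‖y‖)/a) * (f ((a/‖y‖) • y) - M) := by ring
    rw [keyid]
    have h1 : (‖x‖/a) * |f ((a/‖x‖) • x) - f ((a/‖y‖) • y)| ≤ 2 * L * ‖x - y‖ := by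
      rcases eq_or_ne x 0 with h0 | h0
      · simp [h0]; positivity
      · have hy0 : y ≠ 0 := by
          intro h; rw [h, norm_zero] at hxy
          exact h0 (norm_eq_zero.mp (le_antisymm hxy hr))
        have hnx := aux_norm_smul a ha.le x h0
        have hny := aux_norm_smul a ha.le y hy0
        calc (‖x‖/a) * |f ((a/‖x‖) • x) - f ((a/‖y‖) • y)|
            ≤ (‖x‖/a) * (L * ‖(a/‖x‖) • x - (a/‖y‖) • y‖) := by
              exact mul_le_mul_of_nonneg_left
                (hfd' _ _ (le_of_eq hnx.symm) (le_of_eq hny.symm)) (by positivity)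
          _ = (L/a) * (‖x‖ * ‖(a/‖x‖) • x - (a/‖y‖) • y‖) := by ring
          _ ≤ (L/a) * (2 * a * ‖x - y‖) := by
              exact mul_le_mul_of_nonneg_left
                (aux_proj_diff a ha.le x y h0 hy0 hxy) (by positivity)
          _ = 2 * L * ‖x - y‖ := by field_simp
    have h2 : ((‖y‖ - ‖x‖)/a) * |f ((a/‖y‖) • y) - M| ≤ 2 * L * ‖x - y‖ := by
      rcases eq_or_ne y 0 with h0 | h0
      · have : ‖x‖ = 0 := le_antisymm (by rw [h0, norm_zero] at hxy; exact hxy) hr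
        rw [h0, norm_zero, this]
        simp only [sub_self, zero_div, zero_mul]
        positivity
      · have hny := aux_norm_smul a ha.le y h0
        have hQ : |f ((a/‖y‖) • y) - M| ≤ 2 * a * L := by
          rw [abs_sub_comm]; exact hM _ hny
        calc ((‖y‖ - ‖x‖)/a) * |f ((a/‖y‖) • y) - M|
            ≤ ((‖y‖ - ‖x‖)/a) * (2 * a * L) := by
              exact mul_le_mul_of_nonneg_left hQ (div_nonneg (sub_nonneg.mpr hxy) ha.le)
          _ = 2 * L * (‖y‖ - ‖x‖) := by field_simp
          _ ≤ 2 * L * ‖x - y‖ := by nlinarith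
    calc |(‖x‖/a) * (f ((a/‖x‖) • x) - f ((a/‖y‖) • y))
          + ((‖x‖ - ‖y‖)/a) * (f ((a/‖y‖) • y) - M)|
        ≤ (‖x‖/a) * |f ((a/‖x‖) • x) - f ((a/‖y‖) • y)|
          + ((‖y‖ - ‖x‖)/a) * |f ((a/‖y‖) • y) - M| := by
          refine (abs_add_le _ _).trans ?_
          rw [abs_mul, abs_mul, abs_div, abs_div, abs_of_nonneg hr,
            abs_of_pos ha, abs_sub_comm ‖x‖ ‖y‖, abs_of_nonneg (sub_nonneg.mpr hxy)]
      _ ≤ 2 * L * ‖x - y‖ + 2 * L * ‖x - y‖ := add_le_add h1 h2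
      _ ≤ 6 * L * ‖x - y‖ := by nlinarith
  -- interior-exterior estimate
  have mixed : ∀ x y : EuclideanSpace ℝ (Fin 2), ‖x‖ < a → a ≤ ‖y‖ →
      |((‖x‖/a) * f ((a/‖x‖) • x) + (1 - ‖x‖/a) * M) - f y| ≤ 6 * L * ‖x - y‖ := by
    intro x y hx hy
    have hr : (0:ℝ) ≤ ‖x‖ := norm_nonneg x
    have hy0 : y ≠ 0 := by
      intro h; rw [h, norm_zero] at hy; exact absurd hy (not_le.mpr ha)
    have hd : ‖y‖ - ‖x‖ ≤ ‖x - y‖ := by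
      rw [norm_sub_rev]; exact norm_sub_norm_le y x
    have hnn : (0:ℝ) ≤ ‖x - y‖ := norm_nonneg _
    have keyid : ((‖x‖/a) * f ((a/‖x‖) • x) + (1 - ‖x‖/a) * M) - f y
        = (‖x‖/a) * (f ((a/‖x‖) • x) - f y)
          + ((a - ‖x‖)/a) * (M - f y) := by field_simp; ring
    rw [keyid]
    have h1 : (‖x‖/a) * |f ((a/‖x‖) • x) - f y| ≤ 2 * L * ‖x - y‖ := by
      rcases eq_or_ne x 0 with h0 | h0
      · simp [h0]; positivity
      · have hnx := aux_norm_smul a ha.le x h0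
        have hux : ‖(a/‖x‖) • x - y‖ ≤ 2 * ‖x - y‖ := by
          calc ‖(a/‖x‖) • x - y‖ ≤ ‖(a/‖x‖) • x - x‖ + ‖x - y‖ := by
                have := norm_add_le ((a/‖x‖) • x - x) (x - y)
                simpa using this
            _ = |a - ‖x‖| + ‖x - y‖ := by rw [aux_dist_smul a x h0]
            _ ≤ 2 * ‖x - y‖ := by
                rw [abs_of_pos (sub_pos.mpr hx)]; linarith
        calc (‖x‖/a) * |f ((a/‖x‖) • x) - f y|
            ≤ 1 * (L * ‖(a/‖x‖) • x - y‖) := by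
              apply mul_le_mul
              · rw [div_le_one ha]; exact hx.le
              · exact hfd' _ _ (le_of_eq hnx.symm) hy
              · positivity
              · norm_num
          _ ≤ 1 * (L * (2 * ‖x - y‖)) := by
              apply mul_le_mul_of_nonneg_left (mul_le_mul_of_nonneg_left hux hL)
              norm_num
          _ = 2 * L * ‖x - y‖ := by ring
    have h2 : ((a - ‖x‖)/a) * |M - f y| ≤ 4 * L * ‖x - y‖ := by
      have hny := aux_norm_smul a ha.le y hy0
      have hMy : |M - f y| ≤ 2 * a * L + L * (‖y‖ - a) := by
        calc |M - f y| ≤ |M - f ((a/‖y‖) • y)| + |f ((a/‖y‖) • y) - f y| := abs_sub_le _ _ _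
          _ ≤ 2 * a * L + L * (‖y‖ - a) := by
              apply add_le_add (hM _ hny)
              calc |f ((a/‖y‖) • y) - f y| ≤ L * ‖(a/‖y‖) • y - y‖ :=
                    hfd' _ _ (le_of_eq hny.symm) hy
                _ = L * (‖y‖ - a) := by
                    rw [aux_dist_smul a y hy0, abs_of_nonpos (by linarith)]; ring
      have hax : a - ‖x‖ ≤ ‖x - y‖ := by linarith
      have hya : ‖y‖ - a ≤ ‖x - y‖ := by linarith
      calc ((a - ‖x‖)/a) * |M - f y|
          ≤ ((a - ‖x‖)/a) * (2 * a * L + L * (‖y‖ - a)) := by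
            apply mul_le_mul_of_nonneg_left hMy
            apply div_nonneg (by linarith) ha.le
        _ = 2 * L * (a - ‖x‖) + L * (‖y‖ - a) * ((a - ‖x‖)/a) := by field_simp
        _ ≤ 2 * L * ‖x - y‖ + L * ‖x - y‖ * 1 := by
            apply add_le_add
            · nlinarith
            · apply mul_le_mul
              · exact mul_le_mul_of_nonneg_left hya hL
              · rw [div_le_one ha]; linarith
              · apply div_nonneg (by linarith) ha.le
              · positivity
        _ ≤ 4 * L * ‖x - y‖ := by nlinarith
    calc |(‖x‖/a) * (f ((a/‖x‖) • x) - f y) + ((a - ‖x‖)/a) * (M - f y)|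
        ≤ (‖x‖/a) * |f ((a/‖x‖) • x) - f y| + ((a - ‖x‖)/a) * |M - f y| := by
          refine (abs_add_le _ _).trans ?_
          rw [abs_mul, abs_mul, abs_div, abs_div, abs_of_nonneg hr,
            abs_of_pos ha, abs_of_nonneg (by linarith : (0:ℝ) ≤ a - ‖x‖)]
      _ ≤ 2 * L * ‖x - y‖ + 4 * L * ‖x - y‖ := add_le_add h1 h2
      _ = 6 * L * ‖x - y‖ := by ring
  apply LipschitzWith.of_dist_le_mul
  intro x y
  rw [Real.dist_eq, dist_eq_norm, NNReal.coe_mul]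
  push_cast
  by_cases hx : a ≤ ‖x‖ <;> by_cases hy : a ≤ ‖y‖
  · rw [if_pos hx, if_pos hy]
    have := hfd' x y hx hy
    nlinarith [norm_nonneg (x - y), L.coe_nonneg]
  · rw [if_pos hx, if_neg hy, abs_sub_comm, norm_sub_rev]
    exact mixed y x (not_le.mp hy) hx
  · rw [if_neg hx, if_pos hy]
    exact mixed x y (not_le.mp hx) hy
  · rw [if_neg hx, if_neg hy]
    rcases le_total ‖x‖ ‖y‖ with h | h
    · exact inner x y (not_le.mp hx) (not_le.mp hy) h
    · rw [abs_sub_comm, norm_sub_rev]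
      exact inner y x (not_le.mp hy) (not_le.mp hx) h
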